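/- Consider the free graded Z-module C with generators a1, a2, a3 in degree 1, b1, b2, b3 in degree 0, c1 in degree k+1, c2 in degree k, d1 in degree -k-1, d2 in degree -k, and with differential d(a1) = d(a2) = b1 + (1-n)b3, d(a3) = 0, d(c1) = (-1)^k(n-1)c2, d(d2) = (1-n)d1, and d = 0 on all other generators, where n and k are integers with k < 0 and n ≠ 1. Then the homology of C is Z² in degree 1, Z² in degree 0, Z/(n-1)Z in degree k, Z/(n-1)Z in degree -k-1, and zero otherwise. -/

import Mathlib

/-- Graded piece of `ι → ℤ` spanned by the standard basis vectors of a given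
degree. -/
def gradedPiece {ι : Type} [DecidableEq ι] (deg : ι → ℤ) (j : ℤ) :
    Submodule ℤ (ι → ℤ) :=
  Submodule.span ℤ {v | ∃ g, deg g = j ∧ v = Pi.single g 1}

/-- The degree-`j` homology of a homogeneous differential `D` on a graded
module, i.e. `(ker D ∩ P_j) / (im D ∩ P_j)`. -/
def homologyAt {R V : Type*} [Ring R] [AddCommGroup V] [Module R V]
    (D : V →ₗ[R] V) (P : Submodule R V) : Type _ :=
  ↥(LinearMap.ker D ⊓ P) ⧸
    Submodule.comap (LinearMap.ker D ⊓ P).subtype (LinearMap.range D ⊓ P)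

noncomputable instance {R V : Type*} [Ring R] [AddCommGroup V] [Module R V]
    (D : V →ₗ[R] V) (P : Submodule R V) : AddCommGroup (homologyAt D P) :=
  Submodule.Quotient.addCommGroup _

noncomputable instance {R V : Type*} [Ring R] [AddCommGroup V] [Module R V]
    (D : V →ₗ[R] V) (P : Submodule R V) : Module R (homologyAt D P) :=
  Submodule.Quotient.module _

/-- Generators `a1, a2, a3` (indices 0-2), `b1, b2, b3` (indices 3-5),
`c1, c2` (indices 6-7), `d1, d2` (indices 8-9); degrees
`1, 1, 1, 0, 0, 0, k+1, k, -k-1, -k`. -/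
def deg10 (k : ℤ) : Fin 10 → ℤ := ![1, 1, 1, 0, 0, 0, k + 1, k, -k - 1, -k]

/-- Differential: `d a1 = d a2 = b1 + (1-n) b3`, `d a3 = 0`,
`d c1 = (-1)^k (n-1) c2`, `d d2 = (1-n) d1`, zero on the other generators. -/
noncomputable def d10 (n k : ℤ) : (Fin 10 → ℤ) →ₗ[ℤ] (Fin 10 → ℤ) :=
  (Pi.basisFun ℤ (Fin 10)).constr ℤ
    ![Pi.single 3 1 + (1 - n) • Pi.single 5 1,
      Pi.single 3 1 + (1 - n) • Pi.single 5 1,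
      0, 0, 0, 0,
      ((((-1 : ℤˣ) ^ k : ℤˣ) : ℤ) * (n - 1)) • Pi.single 7 1,
      0, 0,
      (1 - n) • Pi.single 8 1]

lemma mem_gradedPiece_iff {ι : Type} [Fintype ι] [DecidableEq ι] (deg : ι → ℤ) (j : ℤ)
    (v : ι → ℤ) : v ∈ gradedPiece deg j ↔ ∀ i, deg i ≠ j → v i = 0 := by
  constructor
  · intro hv
    refine Submodule.span_induction ?_ ?_ ?_ ?_ hv
    · rintro x ⟨g, hg, rfl⟩ i hi
      exact Pi.single_eq_of_ne (fun h => hi (by rw [h, hg])) 1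
    · intro i _; rfl
    · intro x y _ _ hx hy i hi
      simp [Pi.add_apply, hx i hi, hy i hi]
    · intro a x _ hx i hi
      simp [Pi.smul_apply, hx i hi]
  · intro h
    have hv : v = ∑ i, Pi.single i (v i) := by
      simp [Finset.univ_sum_single]
    rw [hv]
    apply Submodule.sum_mem
    intro i _
    by_cases hd : deg i = j
    · have h2 : Pi.single i (v i) = v i • (Pi.single i 1 : ι → ℤ) := by
        rw [← Pi.single_smul, smul_eq_mul, mul_one]
      rw [h2]
      exact Submodule.smul_mem _ _ (Submodule.subset_span ⟨i, hd, rfl⟩)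
    · simp [h i hd]

lemma homologyAt_equiv {R V T : Type*} [Ring R] [AddCommGroup V] [Module R V]
    [AddCommGroup T] [Module R T]
    (D : V →ₗ[R] V) (P : Submodule R V) (φ : V →ₗ[R] T)
    (hsurj : ∀ t : T, ∃ x, x ∈ LinearMap.ker D ⊓ P ∧ φ x = t)
    (hker : ∀ x ∈ LinearMap.ker D ⊓ P, (φ x = 0 ↔ x ∈ LinearMap.range D ⊓ P)) :
    Nonempty (homologyAt D P ≃ₗ[R] T) := by
  set K := LinearMap.ker D ⊓ P with hK
  let ψ : K →ₗ[R] T := φ.comp K.subtype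
  have hs : Function.Surjective ψ := by
    intro t
    obtain ⟨x, hx, h⟩ := hsurj t
    exact ⟨⟨x, hx⟩, h⟩
  have hkk : Submodule.comap K.subtype (LinearMap.range D ⊓ P) = LinearMap.ker ψ := by
    ext x
    simp only [Submodule.mem_comap, LinearMap.mem_ker, LinearMap.comp_apply,
      Submodule.subtype_apply, ψ]
    exact (hker x.1 x.2).symm
  exact ⟨(Submodule.quotEquivOfEq _ _ hkk).trans (ψ.quotKerEquivOfSurjective hs)⟩

lemma d10_apply (n k : ℤ) (x : Fin 10 → ℤ) : d10 n k x = fun i =>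
    if i = 3 then x 0 + x 1
    else if i = 5 then (1-n)*(x 0 + x 1)
    else if i = 7 then ((((-1 : ℤˣ) ^ k : ℤˣ) : ℤ))*(n-1)*(x 6)
    else if i = 8 then (1-n)*(x 9)
    else 0 := by
  rw [d10, Module.Basis.constr_apply_fintype]
  funext i
  simp only [Pi.basisFun_equivFun, LinearEquiv.refl_apply, Fin.sum_univ_succ,
    Fin.sum_univ_zero, Matrix.cons_val_zero, Matrix.cons_val_succ,
    Pi.add_apply, Pi.smul_apply, Pi.single_apply, Finset.sum_apply,
    smul_eq_mul, Pi.zero_apply, mul_zero, add_zero, zero_add, mul_ite, mul_one]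
  fin_cases i <;>
    simp [show ((Fin.succ 2).succ.succ.succ : Fin 10) = 6 from rfl,
      show (((Fin.succ 2).succ.succ.succ.succ.succ.succ : Fin 10)) = 9 from rfl] <;> ring

lemma mem_ker_d10 {n k : ℤ} (hn : n ≠ 1) (x : Fin 10 → ℤ) :
    x ∈ LinearMap.ker (d10 n k) ↔ x 0 + x 1 = 0 ∧ x 6 = 0 ∧ x 9 = 0 := by
  have hn1 : (1:ℤ) - n ≠ 0 := by intro h; apply hn; omega
  have hE : (((-1 : ℤˣ) ^ k : ℤˣ) : ℤ) ≠ 0 := Units.ne_zero _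
  have hEn : (((-1 : ℤˣ) ^ k : ℤˣ) : ℤ) * (n - 1) ≠ 0 :=
    mul_ne_zero hE (by intro h; apply hn; omega)
  rw [LinearMap.mem_ker, d10_apply]
  constructor
  · intro h
    have h3 := congrFun h 3
    have h7 := congrFun h 7
    have h8 := congrFun h 8
    simp only [Pi.zero_apply, Fin.ext_iff, Fin.isValue, show ((3:Fin 10):ℕ) = 3 from rfl,
      show ((7:Fin 10):ℕ) = 7 from rfl, show ((5:Fin 10):ℕ) = 5 from rfl,
      show ((8:Fin 10):ℕ) = 8 from rfl] at h3 h7 h8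
    norm_num at h3 h7 h8
    exact ⟨h3, h7.resolve_left (by intro h; apply hn; omega),
      h8.resolve_left hn1⟩
  · rintro ⟨h1, h2, h3⟩
    funext i
    simp [h1, h2, h3]

def intCastLM (m : ℕ) : ℤ →ₗ[ℤ] ZMod m where
  toFun := fun z => (z : ZMod m)
  map_add' := by intro a b; push_cast; ring
  map_smul' := by intro a b; simp [zsmul_eq_mul]

@[simp] lemma intCastLM_apply (m : ℕ) (z : ℤ) : intCastLM m z = (z : ZMod m) := rfl


def target_congr {r₁ r₂ s₁ s₂ : ℕ} (m : ℕ) (hr : r₁ = r₂) (hs : s₁ = s₂) :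
    ((Fin r₁ → ℤ) × (Fin s₁ → ZMod m)) ≃ₗ[ℤ] ((Fin r₂ → ℤ) × (Fin s₂ → ZMod m)) := by
  subst hr; subst hs; exact LinearEquiv.refl _ _

/-- The linearized LCH of the trefoil linked with a Legendrian unknot with
Maslov shift `k < 0`, for augmentation `ε_n` (`n ≠ 1`): homology is `ℤ²` in
degree 1, `ℤ²` in degree 0, `ℤ/(n-1)ℤ` in degrees `k` and `-k-1`, zero in all
other degrees. -/
theorem stmt_10 (n k : ℤ) (hk : k < 0) (hn : n ≠ 1) :
    ∀ j : ℤ,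
      Nonempty (homologyAt (d10 n k) (gradedPiece (deg10 k) j) ≃ₗ[ℤ]
        ((Fin ((if j = 1 then 2 else 0) + (if j = 0 then 2 else 0)) → ℤ) ×
         (Fin ((if j = k then 1 else 0) + (if j = -k - 1 then 1 else 0)) →
           ZMod (n - 1).natAbs))) := by
  intro j
  have hn1 : (1:ℤ) - n ≠ 0 := by intro h; apply hn; omega
  have hn1' : n - 1 ≠ 0 := by intro h; apply hn; omega
  have hEE : (((-1 : ℤˣ) ^ k : ℤˣ) : ℤ) * (((-1 : ℤˣ) ^ k : ℤˣ) : ℤ) = 1 := by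
    rcases Int.units_eq_one_or ((-1 : ℤˣ) ^ k) with h | h <;> rw [h] <;> norm_num
  have hcast : ∀ z : ℤ, ((z : ZMod (n - 1).natAbs) = 0) ↔ (n - 1) ∣ z := fun z => by
    rw [ZMod.intCast_zmod_eq_zero_iff_dvd, Int.natAbs_dvd]
  rcases eq_or_ne j 1 with rfl | hj1
  · rcases eq_or_ne k (-2) with rfl | hk2
    · -- j = 1, k = -2
      refine Nonempty.map (fun e => e.trans (target_congr _ (by norm_num) (by norm_num)))
        (homologyAt_equiv _ _
        ((LinearMap.pi ![LinearMap.proj 1, LinearMap.proj 2]).prod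
          (LinearMap.pi fun _ : Fin 1 => (intCastLM (n - 1).natAbs).comp
            (LinearMap.proj (8 : Fin 10)))) ?_ ?_)
      · intro t
        obtain ⟨t1, t2⟩ := t
        obtain ⟨z, hz⟩ := ZMod.intCast_surjective (t2 0)
        refine ⟨fun i => if i = 0 then -(t1 0) else if i = 1 then t1 0
            else if i = 2 then t1 1 else if i = 8 then z else 0,
          Submodule.mem_inf.2 ⟨?_, ?_⟩, ?_⟩
        · rw [mem_ker_d10 hn]; simp
        · rw [mem_gradedPiece_iff]
          intro i hi
          rcases eq_or_ne i 0 with rfl | i0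
          · exact absurd rfl hi
          rcases eq_or_ne i 1 with rfl | i1
          · exact absurd rfl hi
          rcases eq_or_ne i 2 with rfl | i2
          · exact absurd rfl hi
          rcases eq_or_ne i 8 with rfl | i8
          · exact absurd (by decide : deg10 (-2) 8 = 1) hi
          · simp [i0, i1, i2, i8]
        · simp only [LinearMap.prod_apply, Function.prod_apply, LinearMap.pi_apply, LinearMap.comp_apply,
            LinearMap.proj_apply, intCastLM_apply, Prod.mk.injEq]
          constructor
          · funext i
            fin_cases i <;> simp
          · funext i
            rw [Fin.eq_zero i]
            simpa using hz
      · intro x hx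
        obtain ⟨hxk, hxP⟩ := Submodule.mem_inf.1 hx
        have hP := (mem_gradedPiece_iff _ _ x).1 hxP
        obtain ⟨hk01, hk6, hk9⟩ := (mem_ker_d10 hn x).1 hxk
        have h3 : x 3 = 0 := hP 3 (by decide)
        have h4 : x 4 = 0 := hP 4 (by decide)
        have h5 : x 5 = 0 := hP 5 (by decide)
        have h6 : x 6 = 0 := hP 6 (by decide)
        have h7 : x 7 = 0 := hP 7 (by decide)
        have h9 : x 9 = 0 := hP 9 (by decide)
        constructor
        · intro hφ
          have e1 := congrFun (congrArg Prod.fst hφ) 0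
          have e2 := congrFun (congrArg Prod.fst hφ) 1
          have e8 := congrFun (congrArg Prod.snd hφ) 0
          simp only [LinearMap.prod_apply, Function.prod_apply, LinearMap.pi_apply, LinearMap.comp_apply,
            LinearMap.proj_apply, intCastLM_apply, Prod.fst_zero, Prod.snd_zero,
            Pi.zero_apply, Matrix.cons_val_zero, Matrix.cons_val_one, Matrix.head_cons] at e1 e2 e8
          have h0 : x 0 = 0 := by omega
          obtain ⟨c, hc⟩ := (hcast _).1 e8
          have hall : ∀ i : Fin 10, i ≠ 8 → x i = 0 := by
            intro i hi
            fin_cases i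
            exacts [h0, e1, e2, h3, h4, h5, h6, h7, absurd rfl hi, h9]
          refine Submodule.mem_inf.2 ⟨LinearMap.mem_range.2
            ⟨fun i => if i = 9 then -c else 0, ?_⟩, hxP⟩
          rw [d10_apply]
          funext i
          rcases eq_or_ne i 3 with rfl | i3
          · show (0:ℤ) + 0 = x 3
            rw [hall 3 (by decide)]; ring
          rcases eq_or_ne i 5 with rfl | i5
          · show (1 - n) * ((0:ℤ) + 0) = x 5
            rw [hall 5 (by decide)]; ring
          rcases eq_or_ne i 7 with rfl | i7
          · show (((-1 : ℤˣ) ^ (-2:ℤ) : ℤˣ) : ℤ) * (n - 1) * 0 = x 7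
            rw [hall 7 (by decide)]; ring
          rcases eq_or_ne i 8 with rfl | i8
          · show (1 - n) * -c = x 8
            rw [hc]; ring
          · simp [i3, i5, i7, i8, hall i i8]
        · intro hr
          obtain ⟨w, hw⟩ := LinearMap.mem_range.1 (Submodule.mem_inf.1 hr).1
          have c1 : x 1 = 0 := by rw [← hw, d10_apply]; simp
          have c2 : x 2 = 0 := by rw [← hw, d10_apply]; simp
          have c8 : x 8 = (1 - n) * w 9 := by rw [← hw, d10_apply]; simp
          rw [Prod.ext_iff]
          constructor
          · funext i
            simp only [LinearMap.prod_apply, Function.prod_apply, LinearMap.pi_apply, Prod.fst_zero,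
              Pi.zero_apply]
            fin_cases i <;>
              simp [Matrix.cons_val_zero, Matrix.cons_val_one, Matrix.head_cons,
                LinearMap.proj_apply, c1, c2]
          · funext i
            simp only [LinearMap.prod_apply, Function.prod_apply, LinearMap.pi_apply, LinearMap.comp_apply,
              LinearMap.proj_apply, intCastLM_apply, Prod.snd_zero, Pi.zero_apply]
            rw [hcast]
            exact ⟨-(w 9), by rw [c8]; ring⟩
    · -- j = 1, k ≠ -2
      refine Nonempty.map (fun e => e.trans (target_congr _ (by norm_num)
          (by simp [show (1:ℤ) ≠ k by omega, show (1:ℤ) ≠ -k - 1 by omega])))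
        (homologyAt_equiv _ _
        ((LinearMap.pi ![LinearMap.proj 1, LinearMap.proj 2]).prod
          (0 : (Fin 10 → ℤ) →ₗ[ℤ] (Fin 0 → ZMod (n - 1).natAbs))) ?_ ?_)
      · intro t
        obtain ⟨t1, t2⟩ := t
        refine ⟨fun i => if i = 0 then -(t1 0) else if i = 1 then t1 0
            else if i = 2 then t1 1 else 0,
          Submodule.mem_inf.2 ⟨?_, ?_⟩, ?_⟩
        · rw [mem_ker_d10 hn]; simp
        · rw [mem_gradedPiece_iff]
          intro i hi
          rcases eq_or_ne i 0 with rfl | i0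
          · exact absurd rfl hi
          rcases eq_or_ne i 1 with rfl | i1
          · exact absurd rfl hi
          rcases eq_or_ne i 2 with rfl | i2
          · exact absurd rfl hi
          · simp [i0, i1, i2]
        · simp only [LinearMap.prod_apply, Function.prod_apply, LinearMap.pi_apply, LinearMap.zero_apply,
            Prod.mk.injEq]
          constructor
          · funext i
            fin_cases i <;> simp
          · exact Subsingleton.elim _ _
      · intro x hx
        obtain ⟨hxk, hxP⟩ := Submodule.mem_inf.1 hx
        have hP := (mem_gradedPiece_iff _ _ x).1 hxP
        obtain ⟨hk01, hk6, hk9⟩ := (mem_ker_d10 hn x).1 hxk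
        have h3 : x 3 = 0 := hP 3 (by show (0:ℤ) ≠ 1; norm_num)
        have h4 : x 4 = 0 := hP 4 (by show (0:ℤ) ≠ 1; norm_num)
        have h5 : x 5 = 0 := hP 5 (by show (0:ℤ) ≠ 1; norm_num)
        have h7 : x 7 = 0 := hP 7 (by show k ≠ 1; omega)
        have h8 : x 8 = 0 := hP 8 (by show -k - 1 ≠ 1; omega)
        constructor
        · intro hφ
          have e1 := congrFun (congrArg Prod.fst hφ) 0
          have e2 := congrFun (congrArg Prod.fst hφ) 1
          simp only [LinearMap.prod_apply, Function.prod_apply, LinearMap.pi_apply, LinearMap.proj_apply,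
            Prod.fst_zero, Pi.zero_apply, Matrix.cons_val_zero, Matrix.cons_val_one,
            Matrix.head_cons] at e1 e2
          have h0 : x 0 = 0 := by omega
          have hall : ∀ i : Fin 10, x i = 0 := by
            intro i
            fin_cases i
            exacts [h0, e1, e2, h3, h4, h5, hk6, h7, h8, hk9]
          have hx0 : x = 0 := funext hall
          rw [hx0]
          exact zero_mem _
        · intro hr
          obtain ⟨w, hw⟩ := LinearMap.mem_range.1 (Submodule.mem_inf.1 hr).1
          have c1 : x 1 = 0 := by rw [← hw, d10_apply]; simp
          have c2 : x 2 = 0 := by rw [← hw, d10_apply]; simp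
          rw [Prod.ext_iff]
          constructor
          · funext i
            simp only [LinearMap.prod_apply, Function.prod_apply, LinearMap.pi_apply, Prod.fst_zero,
              Pi.zero_apply]
            fin_cases i <;>
              simp [Matrix.cons_val_zero, Matrix.cons_val_one, Matrix.head_cons,
                LinearMap.proj_apply, c1, c2]
          · exact Subsingleton.elim _ _
  rcases eq_or_ne j 0 with rfl | hj0
  · rcases eq_or_ne k (-1) with rfl | hk1
    · -- j = 0, k = -1
      refine Nonempty.map (fun e => e.trans (target_congr _ (by norm_num) (by norm_num)))
        (homologyAt_equiv _ _
        ((LinearMap.pi ![LinearMap.proj 4,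
            LinearMap.proj 5 + (n - 1) • LinearMap.proj 3]).prod
          (LinearMap.pi fun _ : Fin 1 => (intCastLM (n - 1).natAbs).comp
            (LinearMap.proj (8 : Fin 10)))) ?_ ?_)
      · intro t
        obtain ⟨t1, t2⟩ := t
        obtain ⟨z, hz⟩ := ZMod.intCast_surjective (t2 0)
        refine ⟨fun i => if i = 4 then t1 0 else if i = 5 then t1 1
            else if i = 8 then z else 0,
          Submodule.mem_inf.2 ⟨?_, ?_⟩, ?_⟩
        · rw [mem_ker_d10 hn]; simp
        · rw [mem_gradedPiece_iff]
          intro i hi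
          rcases eq_or_ne i 4 with rfl | i4
          · exact absurd rfl hi
          rcases eq_or_ne i 5 with rfl | i5
          · exact absurd rfl hi
          rcases eq_or_ne i 8 with rfl | i8
          · exact absurd (by decide : deg10 (-1) 8 = 0) hi
          · simp [i4, i5, i8]
        · simp only [LinearMap.prod_apply, Function.prod_apply, LinearMap.pi_apply, LinearMap.comp_apply,
            LinearMap.proj_apply, LinearMap.add_apply, LinearMap.smul_apply, smul_eq_mul,
            intCastLM_apply, Prod.mk.injEq]
          constructor
          · funext i
            fin_cases i <;> simp
          · funext i
            rw [Fin.eq_zero i]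
            simpa using hz
      · intro x hx
        obtain ⟨hxk, hxP⟩ := Submodule.mem_inf.1 hx
        have hP := (mem_gradedPiece_iff _ _ x).1 hxP
        obtain ⟨hk01, hk6, hk9⟩ := (mem_ker_d10 hn x).1 hxk
        have h0 : x 0 = 0 := hP 0 (by decide)
        have h1 : x 1 = 0 := hP 1 (by decide)
        have h2 : x 2 = 0 := hP 2 (by decide)
        have h7 : x 7 = 0 := hP 7 (by decide)
        have h9 : x 9 = 0 := hP 9 (by decide)
        constructor
        · intro hφ
          have e4 := congrFun (congrArg Prod.fst hφ) 0
          have e5 := congrFun (congrArg Prod.fst hφ) 1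
          have e8 := congrFun (congrArg Prod.snd hφ) 0
          simp only [LinearMap.prod_apply, Function.prod_apply, LinearMap.pi_apply, LinearMap.comp_apply,
            LinearMap.proj_apply, LinearMap.add_apply, LinearMap.smul_apply, smul_eq_mul,
            intCastLM_apply, Prod.fst_zero, Prod.snd_zero, Pi.zero_apply,
            Matrix.cons_val_zero, Matrix.cons_val_one, Matrix.head_cons] at e4 e5 e8
          obtain ⟨c, hc⟩ := (hcast _).1 e8
          have hall : ∀ i : Fin 10, i ≠ 3 → i ≠ 5 → i ≠ 8 → x i = 0 := by
            intro i i3 i5 i8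
            fin_cases i
            exacts [h0, h1, h2, absurd rfl i3, e4, absurd rfl i5, hk6, h7, absurd rfl i8, h9]
          refine Submodule.mem_inf.2 ⟨LinearMap.mem_range.2
            ⟨fun i => if i = 0 then x 3 else if i = 9 then -c else 0, ?_⟩, hxP⟩
          rw [d10_apply]
          funext i
          rcases eq_or_ne i 3 with rfl | i3
          · show x 3 + (0:ℤ) = x 3
            ring
          rcases eq_or_ne i 5 with rfl | i5
          · show (1 - n) * (x 3 + (0:ℤ)) = x 5
            linear_combination -e5
          rcases eq_or_ne i 7 with rfl | i7
          · show (((-1 : ℤˣ) ^ (-1:ℤ) : ℤˣ) : ℤ) * (n - 1) * 0 = x 7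
            rw [h7]; ring
          rcases eq_or_ne i 8 with rfl | i8
          · show (1 - n) * -c = x 8
            rw [hc]; ring
          · simp [i3, i5, i7, i8, hall i i3 i5 i8]
        · intro hr
          obtain ⟨w, hw⟩ := LinearMap.mem_range.1 (Submodule.mem_inf.1 hr).1
          have c3 : x 3 = w 0 + w 1 := by rw [← hw, d10_apply]; simp
          have c4 : x 4 = 0 := by rw [← hw, d10_apply]; simp
          have c5 : x 5 = (1 - n) * (w 0 + w 1) := by rw [← hw, d10_apply]; simp
          have c8 : x 8 = (1 - n) * w 9 := by rw [← hw, d10_apply]; simp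
          rw [Prod.ext_iff]
          constructor
          · funext i
            simp only [LinearMap.prod_apply, Function.prod_apply, LinearMap.pi_apply, Prod.fst_zero,
              Pi.zero_apply]
            fin_cases i
            · simpa using c4
            · simp only [Fin.mk_one, Matrix.cons_val_one, Matrix.head_cons, Matrix.cons_val_zero,
                LinearMap.add_apply, LinearMap.smul_apply, LinearMap.proj_apply, smul_eq_mul]
              linear_combination c5 + (n - 1) * c3
          · funext i
            simp only [LinearMap.prod_apply, Function.prod_apply, LinearMap.pi_apply, LinearMap.comp_apply,
              LinearMap.proj_apply, intCastLM_apply, Prod.snd_zero, Pi.zero_apply]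
            rw [hcast]
            exact ⟨-(w 9), by rw [c8]; ring⟩
    · -- j = 0, k ≠ -1
      refine Nonempty.map (fun e => e.trans (target_congr _ (by norm_num)
          (by simp [show (0:ℤ) ≠ k by omega, show (0:ℤ) ≠ -k - 1 by omega])))
        (homologyAt_equiv _ _
        ((LinearMap.pi ![LinearMap.proj 4,
            LinearMap.proj 5 + (n - 1) • LinearMap.proj 3]).prod
          (0 : (Fin 10 → ℤ) →ₗ[ℤ] (Fin 0 → ZMod (n - 1).natAbs))) ?_ ?_)
      · intro t
        obtain ⟨t1, t2⟩ := t
        refine ⟨fun i => if i = 4 then t1 0 else if i = 5 then t1 1 else 0,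
          Submodule.mem_inf.2 ⟨?_, ?_⟩, ?_⟩
        · rw [mem_ker_d10 hn]; simp
        · rw [mem_gradedPiece_iff]
          intro i hi
          rcases eq_or_ne i 4 with rfl | i4
          · exact absurd rfl hi
          rcases eq_or_ne i 5 with rfl | i5
          · exact absurd rfl hi
          · simp [i4, i5]
        · simp only [LinearMap.prod_apply, Function.prod_apply, LinearMap.pi_apply, LinearMap.proj_apply,
            LinearMap.add_apply, LinearMap.smul_apply, smul_eq_mul, LinearMap.zero_apply,
            Prod.mk.injEq]
          constructor
          · funext i
            fin_cases i <;> simp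
          · exact Subsingleton.elim _ _
      · intro x hx
        obtain ⟨hxk, hxP⟩ := Submodule.mem_inf.1 hx
        have hP := (mem_gradedPiece_iff _ _ x).1 hxP
        obtain ⟨hk01, hk6, hk9⟩ := (mem_ker_d10 hn x).1 hxk
        have h0 : x 0 = 0 := hP 0 (by show (1:ℤ) ≠ 0; norm_num)
        have h1 : x 1 = 0 := hP 1 (by show (1:ℤ) ≠ 0; norm_num)
        have h2 : x 2 = 0 := hP 2 (by show (1:ℤ) ≠ 0; norm_num)
        have h7 : x 7 = 0 := hP 7 (by show k ≠ 0; omega)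
        have h8 : x 8 = 0 := hP 8 (by show -k - 1 ≠ 0; omega)
        have h9 : x 9 = 0 := hP 9 (by show -k ≠ 0; omega)
        constructor
        · intro hφ
          have e4 := congrFun (congrArg Prod.fst hφ) 0
          have e5 := congrFun (congrArg Prod.fst hφ) 1
          simp only [LinearMap.prod_apply, Function.prod_apply, LinearMap.pi_apply, LinearMap.proj_apply,
            LinearMap.add_apply, LinearMap.smul_apply, smul_eq_mul, Prod.fst_zero,
            Pi.zero_apply, Matrix.cons_val_zero, Matrix.cons_val_one, Matrix.head_cons]
            at e4 e5
          have hall : ∀ i : Fin 10, i ≠ 3 → i ≠ 5 → x i = 0 := by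
            intro i i3 i5
            fin_cases i
            exacts [h0, h1, h2, absurd rfl i3, e4, absurd rfl i5, hk6, h7, h8, h9]
          refine Submodule.mem_inf.2 ⟨LinearMap.mem_range.2
            ⟨fun i => if i = 0 then x 3 else 0, ?_⟩, hxP⟩
          rw [d10_apply]
          funext i
          rcases eq_or_ne i 3 with rfl | i3
          · show x 3 + (0:ℤ) = x 3
            ring
          rcases eq_or_ne i 5 with rfl | i5
          · show (1 - n) * (x 3 + (0:ℤ)) = x 5
            linear_combination -e5
          rcases eq_or_ne i 7 with rfl | i7
          · show (((-1 : ℤˣ) ^ k : ℤˣ) : ℤ) * (n - 1) * 0 = x 7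
            rw [h7]; ring
          rcases eq_or_ne i 8 with rfl | i8
          · show (1 - n) * (0:ℤ) = x 8
            rw [h8]; ring
          · simp [i3, i5, i7, i8, hall i i3 i5]
        · intro hr
          obtain ⟨w, hw⟩ := LinearMap.mem_range.1 (Submodule.mem_inf.1 hr).1
          have c3 : x 3 = w 0 + w 1 := by rw [← hw, d10_apply]; simp
          have c4 : x 4 = 0 := by rw [← hw, d10_apply]; simp
          have c5 : x 5 = (1 - n) * (w 0 + w 1) := by rw [← hw, d10_apply]; simp
          rw [Prod.ext_iff]
          constructor
          · funext i
            simp only [LinearMap.prod_apply, Function.prod_apply, LinearMap.pi_apply, Prod.fst_zero,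
              Pi.zero_apply]
            fin_cases i
            · simpa using c4
            · simp only [Fin.mk_one, Matrix.cons_val_one, Matrix.head_cons, Matrix.cons_val_zero,
                LinearMap.add_apply, LinearMap.smul_apply, LinearMap.proj_apply, smul_eq_mul]
              linear_combination c5 + (n - 1) * c3
          · exact Subsingleton.elim _ _
  rcases eq_or_ne j k with heq | hjk
  · -- j = k
    refine Nonempty.map (fun e => e.trans (target_congr _ (by simp [hj1, hj0])
        (by simp [if_pos heq, show j ≠ -k - 1 by omega])))
      (homologyAt_equiv _ _
      ((0 : (Fin 10 → ℤ) →ₗ[ℤ] (Fin 0 → ℤ)).prod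
        (LinearMap.pi fun _ : Fin 1 => (intCastLM (n - 1).natAbs).comp
          (LinearMap.proj (7 : Fin 10)))) ?_ ?_)
    · intro t
      obtain ⟨t1, t2⟩ := t
      obtain ⟨z, hz⟩ := ZMod.intCast_surjective (t2 0)
      refine ⟨fun i => if i = 7 then z else 0, Submodule.mem_inf.2 ⟨?_, ?_⟩, ?_⟩
      · rw [mem_ker_d10 hn]; simp
      · rw [mem_gradedPiece_iff]
        intro i hi
        rcases eq_or_ne i 7 with rfl | i7
        · exact absurd heq.symm hi
        · simp [i7]
      · simp only [LinearMap.prod_apply, Function.prod_apply, LinearMap.pi_apply, LinearMap.comp_apply,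
          LinearMap.proj_apply, intCastLM_apply, LinearMap.zero_apply, Prod.mk.injEq]
        constructor
        · exact Subsingleton.elim _ _
        · funext i
          rw [Fin.eq_zero i]
          simpa using hz
    · intro x hx
      obtain ⟨hxk, hxP⟩ := Submodule.mem_inf.1 hx
      have hP := (mem_gradedPiece_iff _ _ x).1 hxP
      have h0 : x 0 = 0 := hP 0 (by show (1:ℤ) ≠ j; omega)
      have h1 : x 1 = 0 := hP 1 (by show (1:ℤ) ≠ j; omega)
      have h2 : x 2 = 0 := hP 2 (by show (1:ℤ) ≠ j; omega)
      have h3 : x 3 = 0 := hP 3 (by show (0:ℤ) ≠ j; omega)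
      have h4 : x 4 = 0 := hP 4 (by show (0:ℤ) ≠ j; omega)
      have h5 : x 5 = 0 := hP 5 (by show (0:ℤ) ≠ j; omega)
      have h6 : x 6 = 0 := hP 6 (by show k + 1 ≠ j; omega)
      have h8 : x 8 = 0 := hP 8 (by show -k - 1 ≠ j; omega)
      have h9 : x 9 = 0 := hP 9 (by show -k ≠ j; omega)
      constructor
      · intro hφ
        have e7 := congrFun (congrArg Prod.snd hφ) 0
        simp only [LinearMap.prod_apply, Function.prod_apply, LinearMap.pi_apply, LinearMap.comp_apply,
          LinearMap.proj_apply, intCastLM_apply, Prod.snd_zero, Pi.zero_apply] at e7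
        obtain ⟨c, hc⟩ := (hcast _).1 e7
        have hall : ∀ i : Fin 10, i ≠ 7 → x i = 0 := by
          intro i i7
          fin_cases i
          exacts [h0, h1, h2, h3, h4, h5, h6, absurd rfl i7, h8, h9]
        refine Submodule.mem_inf.2 ⟨LinearMap.mem_range.2
          ⟨fun i => if i = 6 then (((-1 : ℤˣ) ^ k : ℤˣ) : ℤ) * c else 0, ?_⟩, hxP⟩
        rw [d10_apply]
        funext i
        rcases eq_or_ne i 3 with rfl | i3
        · show (0:ℤ) + 0 = x 3
          rw [h3]; ring
        rcases eq_or_ne i 5 with rfl | i5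
        · show (1 - n) * ((0:ℤ) + 0) = x 5
          rw [h5]; ring
        rcases eq_or_ne i 7 with rfl | i7
        · show (((-1 : ℤˣ) ^ k : ℤˣ) : ℤ) * (n - 1) *
            ((((-1 : ℤˣ) ^ k : ℤˣ) : ℤ) * c) = x 7
          rw [hc]
          linear_combination (n - 1) * c * hEE
        rcases eq_or_ne i 8 with rfl | i8
        · show (1 - n) * (0:ℤ) = x 8
          rw [h8]; ring
        · simp [i3, i5, i7, i8, hall i i7]
      · intro hr
        obtain ⟨w, hw⟩ := LinearMap.mem_range.1 (Submodule.mem_inf.1 hr).1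
        have c7 : x 7 = (((-1 : ℤˣ) ^ k : ℤˣ) : ℤ) * (n - 1) * w 6 := by
          rw [← hw, d10_apply]; simp
        rw [Prod.ext_iff]
        constructor
        · exact Subsingleton.elim _ _
        · funext i
          simp only [LinearMap.prod_apply, Function.prod_apply, LinearMap.pi_apply, LinearMap.comp_apply,
            LinearMap.proj_apply, intCastLM_apply, Prod.snd_zero, Pi.zero_apply]
          rw [hcast]
          exact ⟨(((-1 : ℤˣ) ^ k : ℤˣ) : ℤ) * w 6, by rw [c7]; ring⟩
  rcases eq_or_ne j (-k - 1) with heq | hjd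
  · -- j = -k - 1, with k ≤ -3
    refine Nonempty.map (fun e => e.trans (target_congr _ (by simp [hj1, hj0])
        (by simp [if_pos heq, hjk])))
      (homologyAt_equiv _ _
      ((0 : (Fin 10 → ℤ) →ₗ[ℤ] (Fin 0 → ℤ)).prod
        (LinearMap.pi fun _ : Fin 1 => (intCastLM (n - 1).natAbs).comp
          (LinearMap.proj (8 : Fin 10)))) ?_ ?_)
    · intro t
      obtain ⟨t1, t2⟩ := t
      obtain ⟨z, hz⟩ := ZMod.intCast_surjective (t2 0)
      refine ⟨fun i => if i = 8 then z else 0, Submodule.mem_inf.2 ⟨?_, ?_⟩, ?_⟩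
      · rw [mem_ker_d10 hn]; simp
      · rw [mem_gradedPiece_iff]
        intro i hi
        rcases eq_or_ne i 8 with rfl | i8
        · exact absurd heq.symm hi
        · simp [i8]
      · simp only [LinearMap.prod_apply, Function.prod_apply, LinearMap.pi_apply, LinearMap.comp_apply,
          LinearMap.proj_apply, intCastLM_apply, LinearMap.zero_apply, Prod.mk.injEq]
        constructor
        · exact Subsingleton.elim _ _
        · funext i
          rw [Fin.eq_zero i]
          simpa using hz
    · intro x hx
      obtain ⟨hxk, hxP⟩ := Submodule.mem_inf.1 hx
      have hP := (mem_gradedPiece_iff _ _ x).1 hxP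
      have h0 : x 0 = 0 := hP 0 (by show (1:ℤ) ≠ j; omega)
      have h1 : x 1 = 0 := hP 1 (by show (1:ℤ) ≠ j; omega)
      have h2 : x 2 = 0 := hP 2 (by show (1:ℤ) ≠ j; omega)
      have h3 : x 3 = 0 := hP 3 (by show (0:ℤ) ≠ j; omega)
      have h4 : x 4 = 0 := hP 4 (by show (0:ℤ) ≠ j; omega)
      have h5 : x 5 = 0 := hP 5 (by show (0:ℤ) ≠ j; omega)
      have h6 : x 6 = 0 := hP 6 (by show k + 1 ≠ j; omega)
      have h7 : x 7 = 0 := hP 7 (by show k ≠ j; omega)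
      have h9 : x 9 = 0 := hP 9 (by show -k ≠ j; omega)
      constructor
      · intro hφ
        have e8 := congrFun (congrArg Prod.snd hφ) 0
        simp only [LinearMap.prod_apply, Function.prod_apply, LinearMap.pi_apply, LinearMap.comp_apply,
          LinearMap.proj_apply, intCastLM_apply, Prod.snd_zero, Pi.zero_apply] at e8
        obtain ⟨c, hc⟩ := (hcast _).1 e8
        have hall : ∀ i : Fin 10, i ≠ 8 → x i = 0 := by
          intro i i8
          fin_cases i
          exacts [h0, h1, h2, h3, h4, h5, h6, h7, absurd rfl i8, h9]
        refine Submodule.mem_inf.2 ⟨LinearMap.mem_range.2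
          ⟨fun i => if i = 9 then -c else 0, ?_⟩, hxP⟩
        rw [d10_apply]
        funext i
        rcases eq_or_ne i 3 with rfl | i3
        · show (0:ℤ) + 0 = x 3
          rw [h3]; ring
        rcases eq_or_ne i 5 with rfl | i5
        · show (1 - n) * ((0:ℤ) + 0) = x 5
          rw [h5]; ring
        rcases eq_or_ne i 7 with rfl | i7
        · show (((-1 : ℤˣ) ^ k : ℤˣ) : ℤ) * (n - 1) * 0 = x 7
          rw [h7]; ring
        rcases eq_or_ne i 8 with rfl | i8
        · show (1 - n) * -c = x 8
          rw [hc]; ring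
        · simp [i3, i5, i7, i8, hall i i8]
      · intro hr
        obtain ⟨w, hw⟩ := LinearMap.mem_range.1 (Submodule.mem_inf.1 hr).1
        have c8 : x 8 = (1 - n) * w 9 := by rw [← hw, d10_apply]; simp
        rw [Prod.ext_iff]
        constructor
        · exact Subsingleton.elim _ _
        · funext i
          simp only [LinearMap.prod_apply, Function.prod_apply, LinearMap.pi_apply, LinearMap.comp_apply,
            LinearMap.proj_apply, intCastLM_apply, Prod.snd_zero, Pi.zero_apply]
          rw [hcast]
          exact ⟨-(w 9), by rw [c8]; ring⟩
  · -- all other degrees: homology is zero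
    refine Nonempty.map (fun e => e.trans (target_congr _ (by simp [hj1, hj0])
        (by simp [hjk, hjd]))) (homologyAt_equiv _ _
      (0 : (Fin 10 → ℤ) →ₗ[ℤ]
        ((Fin 0 → ℤ) × (Fin 0 → ZMod (n - 1).natAbs))) ?_ ?_)
    · intro t
      exact ⟨0, zero_mem _, Subsingleton.elim _ _⟩
    · intro x hx
      obtain ⟨hxk, hxP⟩ := Submodule.mem_inf.1 hx
      have hP := (mem_gradedPiece_iff _ _ x).1 hxP
      obtain ⟨hk01, hk6, hk9⟩ := (mem_ker_d10 hn x).1 hxk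
      have h0 : x 0 = 0 := hP 0 (by show (1:ℤ) ≠ j; omega)
      have h1 : x 1 = 0 := hP 1 (by show (1:ℤ) ≠ j; omega)
      have h2 : x 2 = 0 := hP 2 (by show (1:ℤ) ≠ j; omega)
      have h3 : x 3 = 0 := hP 3 (by show (0:ℤ) ≠ j; omega)
      have h4 : x 4 = 0 := hP 4 (by show (0:ℤ) ≠ j; omega)
      have h5 : x 5 = 0 := hP 5 (by show (0:ℤ) ≠ j; omega)
      have h7 : x 7 = 0 := hP 7 (by show k ≠ j; omega)
      have h8 : x 8 = 0 := hP 8 (by show -k - 1 ≠ j; omega)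
      have hall : ∀ i : Fin 10, x i = 0 := by
        intro i
        fin_cases i
        exacts [h0, h1, h2, h3, h4, h5, hk6, h7, h8, hk9]
      have hx0 : x = 0 := funext hall
      constructor
      · intro _
        rw [hx0]
        exact zero_mem _
      · intro _
        rw [hx0]
        simp
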